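/- arXiv:2108.10237 — 2 statements merged into one kernel-verified Lean document; each statement's English description precedes it below -/
import Mathlib

section
/- Let V be an n-dimensional complex inner product space, let 1 ≤ k ≤ n, let σ be a real number, and let R be a Kähler-type curvature tensor on V. Suppose that for every k-dimensional complex subspace Σ of V and every X ∈ Σ one has Ric_k(Σ)(X,X̄) ≤ −(k+1)σ|X|². Then for every X ∈ V, (k−1)|X|²·Ric(X,X̄) + (n−k)·R(X,X̄,X,X̄) ≤ −(n−1)(k+1)σ|X|⁴. -/
/-- A Kähler-type curvature tensor on a complex vector space `V`:
`R X Y Z W` stands for `R(X, Ȳ, Z, W̄)`; it is ℂ-linear in the first and third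
arguments, conjugate-linear in the second and fourth, and satisfies the
Kähler symmetries. -/
structure KahlerCurvature (V : Type*) [AddCommGroup V] [Module ℂ V] where
  R : V → V → V → V → ℂ
  add1 : ∀ X X' Y Z W, R (X + X') Y Z W = R X Y Z W + R X' Y Z W
  smul1 : ∀ (a : ℂ) (X Y Z W : V), R (a • X) Y Z W = a * R X Y Z W
  add2 : ∀ X Y Y' Z W, R X (Y + Y') Z W = R X Y Z W + R X Y' Z W
  smul2 : ∀ (a : ℂ) (X Y Z W : V), R X (a • Y) Z W = (starRingEnd ℂ) a * R X Y Z W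
  add3 : ∀ X Y Z Z' W, R X Y (Z + Z') W = R X Y Z W + R X Y Z' W
  smul3 : ∀ (a : ℂ) (X Y Z W : V), R X Y (a • Z) W = a * R X Y Z W
  add4 : ∀ X Y Z W W', R X Y Z (W + W') = R X Y Z W + R X Y Z W'
  smul4 : ∀ (a : ℂ) (X Y Z W : V), R X Y Z (a • W) = (starRingEnd ℂ) a * R X Y Z W
  sym13 : ∀ X Y Z W, R X Y Z W = R Z Y X W
  sym24 : ∀ X Y Z W, R X Y Z W = R X W Z Y
  conj_symm : ∀ X Y Z W, R Y X W Z = (starRingEnd ℂ) (R X Y Z W)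

open Finset Module

namespace KahlerCurvature
variable {V : Type*} [AddCommGroup V] [Module ℂ V] (T : KahlerCurvature V)

lemma zero3 (X Y W : V) : T.R X Y 0 W = 0 := by
  have := T.smul3 0 X Y 0 W; simpa using this

lemma zero4 (X Y Z : V) : T.R X Y Z 0 = 0 := by
  have := T.smul4 0 X Y Z 0; simpa using this

lemma sum3 {ι : Type*} (s : Finset ι) (Z : ι → V) (X Y W : V) :
    T.R X Y (∑ i ∈ s, Z i) W = ∑ i ∈ s, T.R X Y (Z i) W := by
  classical
  induction s using Finset.induction with
  | empty => simpa using T.zero3 X Y W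
  | insert _ _ h ih => rw [Finset.sum_insert h, T.add3, ih, Finset.sum_insert h]

lemma sum4 {ι : Type*} (s : Finset ι) (W : ι → V) (X Y Z : V) :
    T.R X Y Z (∑ i ∈ s, W i) = ∑ i ∈ s, T.R X Y Z (W i) := by
  classical
  induction s using Finset.induction with
  | empty => simpa using T.zero4 X Y Z
  | insert _ _ h ih => rw [Finset.sum_insert h, T.add4, ih, Finset.sum_insert h]

end KahlerCurvature

open Module in
/-- basis independence of the Ricci trace -/
lemma ric_indep {V : Type*} [NormedAddCommGroup V] [InnerProductSpace ℂ V]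
    [FiniteDimensional ℂ V] {n : ℕ} (T : KahlerCurvature V)
    (b e : OrthonormalBasis (Fin n) ℂ V) (X Y : V) :
    ∑ i, T.R X Y (b i) (b i) = ∑ i, T.R X Y (e i) (e i) := by
  classical
  have hb : ∀ i, b i = ∑ p, (inner ℂ (e p) (b i) : ℂ) • e p := by
    intro i
    conv_lhs => rw [← e.sum_repr (b i)]
    simp [OrthonormalBasis.repr_apply_apply]
  calc ∑ i, T.R X Y (b i) (b i)
      = ∑ i, ∑ p, ∑ q, (inner ℂ (e p) (b i) : ℂ) * ((inner ℂ (b i) (e q) : ℂ)) * T.R X Y (e p) (e q) := by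
        refine Finset.sum_congr rfl fun i _ => ?_
        conv_lhs => rw [hb i]
        rw [T.sum3]
        refine Finset.sum_congr rfl fun p _ => ?_
        rw [T.smul3, T.sum4]
        rw [Finset.mul_sum]
        refine Finset.sum_congr rfl fun q _ => ?_
        rw [T.smul4]
        rw [← inner_conj_symm (b i) (e q)]
        ring
    _ = ∑ p, ∑ q, (∑ i, (inner ℂ (e p) (b i) : ℂ) * (inner ℂ (b i) (e q) : ℂ)) * T.R X Y (e p) (e q) := by
        rw [Finset.sum_comm]
        refine Finset.sum_congr rfl fun p _ => ?_
        rw [Finset.sum_comm]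
        refine Finset.sum_congr rfl fun q _ => ?_
        rw [Finset.sum_mul]
    _ = ∑ p, ∑ q, (inner ℂ (e p) (e q) : ℂ) * T.R X Y (e p) (e q) := by
        refine Finset.sum_congr rfl fun p _ => Finset.sum_congr rfl fun q _ => ?_
        rw [b.sum_inner_mul_inner]
    _ = ∑ i, T.R X Y (e i) (e i) := by
        refine Finset.sum_congr rfl fun p _ => ?_
        have h := orthonormal_iff_ite.mp e.orthonormal
        calc ∑ q, (inner ℂ (e p) (e q) : ℂ) * T.R X Y (e p) (e q)
            = ∑ q, (if p = q then (1:ℂ) else 0) * T.R X Y (e p) (e q) :=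
              Finset.sum_congr rfl fun q _ => by rw [h p q]
          _ = T.R X Y (e p) (e p) := by simp


section
variable {V : Type*} [NormedAddCommGroup V] [InnerProductSpace ℂ V] [FiniteDimensional ℂ V]

lemma exists_sub {n k : ℕ} (hk : 1 ≤ k)
    (b : OrthonormalBasis (Fin n) ℂ V) (J : Finset (Fin n)) (hJ : J.card = k) :
    ∃ (P : Submodule ℂ V) (_ : Module.finrank ℂ P = k) (f : OrthonormalBasis (Fin k) ℂ P),
      (∀ j ∈ J, b j ∈ P) ∧ ∀ (F : V → ℂ), ∑ i, F ((f i : V)) = ∑ j ∈ J, F (b j) := by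
  classical
  let σ : Fin k ≃ J := (finCongr hJ.symm).trans J.equivFin.symm
  let v : Fin k → V := fun i => b (σ i)
  have hinj : Function.Injective fun i : Fin k => ((σ i : Fin n)) := by
    intro i j h
    exact σ.injective (Subtype.ext h)
  have hv : Orthonormal ℂ v := b.orthonormal.comp _ hinj
  let P := Submodule.span ℂ (Set.range v)
  have hP : finrank ℂ P = k := by
    rw [finrank_span_eq_card hv.linearIndependent]; simp
  have hmem : ∀ i, v i ∈ P := fun i => Submodule.subset_span ⟨i, rfl⟩
  let w : Fin k → P := fun i => ⟨v i, hmem i⟩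
  have hw : Orthonormal ℂ w := by
    rw [orthonormal_iff_ite] at hv ⊢
    intro i j
    rw [Submodule.coe_inner]
    exact hv i j
  haveI : Nonempty (Fin k) := ⟨⟨0, hk⟩⟩
  let B := basisOfLinearIndependentOfCardEqFinrank hw.linearIndependent (by simp [hP])
  have hB : ⇑B = w := coe_basisOfLinearIndependentOfCardEqFinrank _ _
  let f := B.toOrthonormalBasis (by rw [hB]; exact hw)
  have hf : ∀ i, (f i : V) = v i := by
    intro i
    show ((B.toOrthonormalBasis _) i : V) = v i
    rw [Basis.coe_toOrthonormalBasis, hB]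
  refine ⟨P, hP, f, ?_, ?_⟩
  · intro j hj
    have : v (σ.symm ⟨j, hj⟩) = b j := by
      show b _ = b j
      rw [σ.apply_symm_apply]
    exact this ▸ hmem _
  · intro F
    calc ∑ i, F (f i : V) = ∑ i, F (b (σ i)) := by
          refine Finset.sum_congr rfl fun i _ => by rw [hf]
      _ = ∑ j : J, F (b j) := Equiv.sum_comp σ (fun j : J => F (b (j : Fin n)))
      _ = ∑ j ∈ J, F (b j) := Finset.sum_coe_sort J (fun j => F (b j))

end


lemma card_filter_mem {α : Type*} [DecidableEq α] (s : Finset α) {i : α} (hi : i ∈ s) (r : ℕ) :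
    ((powersetCard (r+1) s).filter (fun I => i ∈ I)).card = (s.card - 1).choose r := by
  have : ((powersetCard (r+1) s).filter (fun I => i ∈ I)).card
      = (powersetCard r (s.erase i)).card := by
    apply Finset.card_bij (fun I _ => I.erase i)
    · intro I hI
      simp only [mem_filter, mem_powersetCard] at hI
      exact mem_powersetCard.2 ⟨erase_subset_erase i hI.1.1,
        by rw [card_erase_of_mem hI.2, hI.1.2]; omega⟩
    · intro I hI I' hI' h
      simp only [mem_filter] at hI hI'
      rw [← insert_erase hI.2, ← insert_erase hI'.2, h]
    · intro I' hI'
      simp only [mem_powersetCard] at hI'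
      have hiI' : i ∉ I' := fun h => (mem_erase.1 (hI'.1 h)).1 rfl
      refine ⟨insert i I', ?_, by rw [erase_insert hiI']⟩
      simp only [mem_filter, mem_powersetCard]
      exact ⟨⟨insert_subset hi (hI'.1.trans (erase_subset i s)),
        by rw [card_insert_of_notMem hiI', hI'.2]⟩, mem_insert_self i I'⟩
  rw [this, card_powersetCard, card_erase_of_mem hi]

lemma key_count {n k : ℕ} (hk1 : 1 ≤ k) (hkn : k ≤ n) {α : Type*} [DecidableEq α]
    (s : Finset α) (hs : s.card = n - 1) {i : α} (hi : i ∈ s) :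
    (n - 1) * ((powersetCard (k-1) s).filter (fun I => i ∈ I)).card
      = (k - 1) * (n-1).choose (k-1) := by
  obtain ⟨m, rfl⟩ : ∃ m, k = m + 1 := ⟨k - 1, by omega⟩
  match m with
  | 0 =>
    simp only [Nat.add_sub_cancel]
    refine mul_eq_zero.2 (Or.inr ?_) |>.trans (by ring)
    rw [Finset.card_eq_zero, Finset.filter_eq_empty_iff]
    simp
  | m+1 =>
    have hn2 : 2 ≤ n := by omega
    simp only [Nat.add_sub_cancel]
    rw [card_filter_mem s hi m, hs]
    have h := Nat.add_one_mul_choose_eq (n-2) m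
    have e1 : n - 1 - 1 = n - 2 := by omega
    have e2 : (n-2).succ = n - 1 := by omega
    rw [e1, ← e2, h, e2]
    rw [show n - 2 + 1 = n - 1 by omega]
    ring


section
open Finset Module
variable {V : Type*} [NormedAddCommGroup V] [InnerProductSpace ℂ V] [FiniteDimensional ℂ V]

lemma coreB {n k : ℕ} [NeZero n] (hk1 : 1 ≤ k) (hkn : k ≤ n) (σ : ℝ) (T : KahlerCurvature V)
    (b : OrthonormalBasis (Fin n) ℂ V)
    (hRick : ∀ P : Submodule ℂ V, Module.finrank ℂ P = k →
      ∀ f : OrthonormalBasis (Fin k) ℂ P, ∀ X ∈ P,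
        (∑ j, T.R X X (f j : V) (f j : V)).re ≤ -((k : ℝ) + 1) * σ * ‖X‖ ^ 2) :
    ((n:ℝ)-1) * (T.R (b 0) (b 0) (b 0) (b 0)).re
        + ((k:ℝ)-1) * ∑ i ∈ Finset.univ.erase 0, (T.R (b 0) (b 0) (b i) (b i)).re
      ≤ ((n:ℝ)-1) * (-((k:ℝ)+1) * σ) := by
  classical
  set u := b 0 with hu
  set s : Finset (Fin n) := Finset.univ.erase 0 with hsdef
  set g : Fin n → ℝ := fun i => (T.R u u (b i) (b i)).re with hg
  have hscard : s.card = n - 1 := by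
    rw [hsdef, card_erase_of_mem (mem_univ _), card_univ, Fintype.card_fin]
  set Pc := powersetCard (k-1) s with hPPc
  have hper : ∀ I ∈ Pc, (T.R u u u u).re + ∑ i ∈ I, g i ≤ -((k:ℝ)+1)*σ := by
    intro I hI
    obtain ⟨hIs, hIcard⟩ := mem_powersetCard.1 hI
    have h0I : (0:Fin n) ∉ I := fun h => (Finset.mem_erase.1 (hIs h)).1 rfl
    have hJ : (insert 0 I).card = k := by
      rw [card_insert_of_notMem h0I, hIcard]; omega
    obtain ⟨P, hP, f, hmem, hsum⟩ := exists_sub hk1 b (insert 0 I) hJ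
    have h := hRick P hP f u (hmem 0 (mem_insert_self _ _))
    rw [hsum (fun z => T.R u u z z)] at h
    rw [Finset.sum_insert h0I] at h
    have hnorm : ‖u‖ = 1 := b.orthonormal.1 0
    rw [hnorm] at h
    have : (T.R u u u u + ∑ i ∈ I, T.R u u (b i) (b i)).re
        = (T.R u u u u).re + ∑ i ∈ I, g i := by
      rw [Complex.add_re, Complex.re_sum]
    rw [this] at h
    calc (T.R u u u u).re + ∑ i ∈ I, g i ≤ -((k:ℝ)+1) * σ * 1 ^ 2 := h
      _ = -((k:ℝ)+1)*σ := by ring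
  have h1 : (Pc.card : ℝ) * (T.R u u u u).re + ∑ I ∈ Pc, ∑ i ∈ I, g i
      ≤ (Pc.card : ℝ) * (-((k:ℝ)+1)*σ) := by
    have := Finset.sum_le_sum hper
    rw [Finset.sum_add_distrib, Finset.sum_const, Finset.sum_const, nsmul_eq_mul,
      nsmul_eq_mul] at this
    exact this
  have h2 : ∑ I ∈ Pc, ∑ i ∈ I, g i
      = ∑ i ∈ s, ((Pc.filter (fun I => i ∈ I)).card : ℝ) * g i := by
    calc ∑ I ∈ Pc, ∑ i ∈ I, g i
        = ∑ I ∈ Pc, ∑ i ∈ s, if i ∈ I then g i else 0 := by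
          refine Finset.sum_congr rfl fun I hI => ?_
          have hIs := (mem_powersetCard.1 hI).1
          rw [← Finset.sum_filter]
          congr 1
          rw [Finset.filter_mem_eq_inter]
          exact (Finset.inter_eq_right.mpr hIs).symm
      _ = ∑ i ∈ s, ∑ I ∈ Pc, if i ∈ I then g i else 0 := Finset.sum_comm
      _ = ∑ i ∈ s, ((Pc.filter (fun I => i ∈ I)).card : ℝ) * g i := by
          refine Finset.sum_congr rfl fun i _ => ?_
          rw [← Finset.sum_filter, Finset.sum_const, nsmul_eq_mul]
  have hNcard : Pc.card = (n-1).choose (k-1) := by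
    rw [hPPc, card_powersetCard, hscard]
  set N : ℝ := ((n-1).choose (k-1) : ℝ) with hN
  have hkey : ∀ i ∈ s, ((n:ℝ)-1) * ((Pc.filter (fun I => i ∈ I)).card : ℝ) = ((k:ℝ)-1) * N := by
    intro i hi
    have hc := key_count hk1 hkn s hscard hi
    have cast := congrArg (Nat.cast : ℕ → ℝ) hc
    push_cast at cast
    rw [Nat.cast_sub (show 1 ≤ n by omega), Nat.cast_sub hk1] at cast
    simpa [hN] using cast
  have hn1 : (0:ℝ) ≤ (n:ℝ) - 1 := by
    have : 1 ≤ n := le_trans hk1 hkn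
    have : (1:ℝ) ≤ (n:ℝ) := by exact_mod_cast this
    linarith
  rw [h2] at h1
  have hmul := mul_le_mul_of_nonneg_left h1 hn1
  rw [mul_add] at hmul
  have h3 : ((n:ℝ)-1) * ∑ i ∈ s, ((Pc.filter (fun I => i ∈ I)).card : ℝ) * g i
      = ((k:ℝ)-1) * N * ∑ i ∈ s, g i := by
    rw [Finset.mul_sum, Finset.mul_sum]
    refine Finset.sum_congr rfl fun i hi => ?_
    rw [← mul_assoc, hkey i hi, mul_assoc]
  have hPcN : ((Pc.card : ℕ) : ℝ) = N := by rw [hNcard, hN]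
  have h4 : N * (((n:ℝ)-1) * (T.R u u u u).re + ((k:ℝ)-1) * ∑ i ∈ s, g i)
      ≤ N * (((n:ℝ)-1) * (-((k:ℝ)+1) * σ)) := by
    calc N * (((n:ℝ)-1) * (T.R u u u u).re + ((k:ℝ)-1) * ∑ i ∈ s, g i)
        = ((n:ℝ)-1) * ((Pc.card : ℝ) * (T.R u u u u).re)
            + ((n:ℝ)-1) * ∑ i ∈ s, ((Pc.filter (fun I => i ∈ I)).card : ℝ) * g i := by
          rw [h3, hPcN]; ring
      _ ≤ ((n:ℝ)-1) * ((Pc.card : ℝ) * (-((k:ℝ)+1)*σ)) := hmul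
      _ = N * (((n:ℝ)-1) * (-((k:ℝ)+1) * σ)) := by rw [hPcN]; ring
  have hNpos : (0:ℝ) < N := by
    rw [hN]
    exact_mod_cast Nat.choose_pos (by omega)
  exact le_of_mul_le_mul_left h4 hNpos

end

/-- Lemma 1 (Chu–Lee–Tam): if the `k`-Ricci curvature satisfies
`Ric_k(Σ)(X, X̄) ≤ -(k+1)σ|X|²` for every `k`-dimensional complex subspace `Σ`
and every `X ∈ Σ`, then for every `X ∈ V`,
`(k-1)|X|² Ric(X,X̄) + (n-k) R(X,X̄,X,X̄) ≤ -(n-1)(k+1)σ|X|⁴`. -/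
theorem stmt0 {V : Type*} [NormedAddCommGroup V] [InnerProductSpace ℂ V]
    [FiniteDimensional ℂ V]
    (n k : ℕ) (hn : Module.finrank ℂ V = n) (hk1 : 1 ≤ k) (hkn : k ≤ n)
    (σ : ℝ) (T : KahlerCurvature V)
    (e : OrthonormalBasis (Fin n) ℂ V)
    (hRick : ∀ P : Submodule ℂ V, Module.finrank ℂ P = k →
      ∀ f : OrthonormalBasis (Fin k) ℂ P, ∀ X ∈ P,
        (∑ j, T.R X X (f j : V) (f j : V)).re ≤ -((k : ℝ) + 1) * σ * ‖X‖ ^ 2) :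
    ∀ X : V,
      ((k : ℝ) - 1) * ‖X‖ ^ 2 * (∑ i, T.R X X (e i) (e i)).re
          + ((n : ℝ) - (k : ℝ)) * (T.R X X X X).re
        ≤ -(((n : ℝ) - 1) * ((k : ℝ) + 1) * σ * ‖X‖ ^ 4) := by
  classical
  intro X
  by_cases hX : X = 0
  · subst hX
    have hz : ∀ Y Z W : V, T.R 0 Y Z W = 0 := fun Y Z W => by
      have := T.smul1 0 0 Y Z W; simpa using this
    simp [hz]
  · haveI : NeZero n := ⟨by omega⟩
    set r : ℝ := ‖X‖ with hr
    have hr0 : r ≠ 0 := norm_ne_zero_iff.mpr hX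
    set u : V := ((r : ℂ))⁻¹ • X with hudef
    have hun : ‖u‖ = 1 := by
      rw [hudef, norm_smul, norm_inv, Complex.norm_real, Real.norm_eq_abs,
        abs_of_nonneg (norm_nonneg X)]
      field_simp
    have hXu : X = (r : ℂ) • u := by
      rw [hudef, smul_smul]
      rw [mul_inv_cancel₀ (by exact_mod_cast hr0), one_smul]
    have hon : Orthonormal ℂ (Set.restrict {0} (fun _ : Fin n => u)) := by
      rw [orthonormal_iff_ite]
      intro i j
      have hij : i = j := Subtype.ext ((Set.mem_singleton_iff.1 i.2).trans
        (Set.mem_singleton_iff.1 j.2).symm)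
      subst hij
      simp only [if_pos rfl, Set.restrict_apply]
      rw [@inner_self_eq_norm_sq_to_K ℂ]; change ((‖u‖ : ℝ) : ℂ) ^ 2 = _; rw [hun]
      norm_num
    obtain ⟨b, hb⟩ := Orthonormal.exists_orthonormalBasis_extension_of_card_eq
      (by simpa using hn) hon
    have hb0 : b 0 = u := hb 0 rfl
    have hsc : ∀ Z W : V, T.R X X Z W = ((r^2 : ℝ) : ℂ) * T.R u u Z W := by
      intro Z W
      rw [hXu, T.smul1, T.smul2, Complex.conj_ofReal]
      push_cast; ring
    have hXXXX : T.R X X X X = ((r^4 : ℝ) : ℂ) * T.R u u u u := by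
      conv_lhs => rw [hXu]
      rw [T.smul1, T.smul2, T.smul3, T.smul4, Complex.conj_ofReal]
      push_cast; ring
    have hRicre : (∑ i, T.R X X (e i) (e i)).re
        = r^2 * (∑ i, T.R u u (b i) (b i)).re := by
      have h1 : ∑ i, T.R X X (e i) (e i) = ((r^2:ℝ):ℂ) * ∑ i, T.R u u (b i) (b i) := by
        rw [ric_indep T e b X X, Finset.mul_sum]
        exact Finset.sum_congr rfl fun i _ => hsc _ _
      rw [h1, Complex.re_ofReal_mul]
    have hXre : (T.R X X X X).re = r^4 * (T.R u u u u).re := by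
      rw [hXXXX, Complex.re_ofReal_mul]
    have hsplit : (∑ i, T.R u u (b i) (b i)).re
        = (T.R u u u u).re
          + ∑ i ∈ Finset.univ.erase 0, (T.R u u (b i) (b i)).re := by
      rw [Complex.re_sum, ← Finset.add_sum_erase _ _ (Finset.mem_univ (0 : Fin n)), hb0]
    have key := coreB hk1 hkn σ T b hRick
    rw [hb0] at key
    rw [hRicre, hXre, hsplit]
    have hmul := mul_le_mul_of_nonneg_left key (show (0:ℝ) ≤ r^4 by positivity)
    calc ((k:ℝ) - 1) * r ^ 2 * (r^2 * ((T.R u u u u).re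
            + ∑ i ∈ Finset.univ.erase 0, (T.R u u (b i) (b i)).re))
          + ((n:ℝ) - (k:ℝ)) * (r^4 * (T.R u u u u).re)
        = r^4 * (((n:ℝ)-1) * (T.R u u u u).re
            + ((k:ℝ)-1) * ∑ i ∈ Finset.univ.erase 0, (T.R u u (b i) (b i)).re) := by ring
      _ ≤ r^4 * (((n:ℝ)-1) * (-((k:ℝ)+1) * σ)) := hmul
      _ = -(((n:ℝ) - 1) * ((k:ℝ) + 1) * σ * r ^ 4) := by ring
end

section
/- Let V be an n-dimensional complex vector space equipped with two Hermitian inner products h and g, let 1 ≤ k ≤ n−1, let σ be a real number, and let R be a Kähler-type curvature tensor on V. Suppose that for every k-dimensional complex subspace Σ of V and every X ∈ Σ one has Ric_k(Σ)(X,X̄) ≤ −(k+1)σ·h(X,X), where Ric_k and the Ricci form Ric are defined using h-orthonormal bases. Then, for any g-orthonormal basis (e₁,…,eₙ) of V, 2·Σ_{i,j} R(eᵢ,ēᵢ,eⱼ,ēⱼ) ≤ −((n−1)(k+1)σ/(n−k))·((tr_g h)² + |h|_g²) − ((k−1)/(n−k))·(tr_g h)·(tr_g Ric) − ((k−1)/(n−k))·⟨h,Ric⟩_g,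 where tr_g h = Σᵢ h(eᵢ,eᵢ), |h|_g² = Σ_{i,j} |h(eᵢ,eⱼ)|², tr_g Ric = Σᵢ Ric(eᵢ,ēᵢ), and ⟨h,Ric⟩_g = Σ_{i,j} h(eᵢ,eⱼ)·Ric(eⱼ,ēᵢ). -/
open Finset Complex

set_option linter.unusedSectionVars false
section Basics
variable {V : Type*} [AddCommGroup V] [Module ℂ V]

variable (h : V → V → ℂ)

section hlem
variable (h_add : ∀ X X' Y, h (X + X') Y = h X Y + h X' Y)
  (h_smul : ∀ (a : ℂ) (X Y : V), h (a • X) Y = a * h X Y)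
  (h_herm : ∀ X Y, h Y X = (starRingEnd ℂ) (h X Y))

include h_add in
lemma h_zero1 (Y : V) : h 0 Y = 0 := by
  have := h_add 0 0 Y; simp at this; exact this

include h_add in
lemma h_sum1 {ι : Type*} (s : Finset ι) (f : ι → V) (Y : V) :
    h (∑ i ∈ s, f i) Y = ∑ i ∈ s, h (f i) Y := by
  classical
  induction s using Finset.induction_on with
  | empty => simpa using h_zero1 h h_add Y
  | insert _ _ hx ih => rw [Finset.sum_insert hx, h_add, ih, Finset.sum_insert hx]

include h_add h_herm in
lemma h_add2 (X Y Y' : V) : h X (Y + Y') = h X Y + h X Y' := by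
  rw [h_herm, h_add, map_add, ← h_herm, ← h_herm]

include h_smul h_herm in
lemma h_smul2 (a : ℂ) (X Y : V) : h X (a • Y) = (starRingEnd ℂ) a * h X Y := by
  rw [h_herm, h_smul, map_mul, ← h_herm]

include h_add h_herm in
lemma h_sum2 {ι : Type*} (s : Finset ι) (f : ι → V) (X : V) :
    h X (∑ i ∈ s, f i) = ∑ i ∈ s, h X (f i) := by
  rw [h_herm, h_sum1 h h_add, map_sum]
  exact Finset.sum_congr rfl fun i _ => (h_herm _ _).symm

include h_herm in
lemma h_real (X : V) : (h X X).im = 0 := by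
  have h2 := congrArg Complex.im (h_herm X X)
  simp at h2
  linarith

end hlem

variable (T : KahlerCurvature V)

lemma R_zero3 (X Y W : V) : T.R X Y 0 W = 0 := by
  have := T.add3 X Y 0 0 W; simp at this; exact this

lemma R_sum3 {ι : Type*} (s : Finset ι) (f : ι → V) (X Y W : V) :
    T.R X Y (∑ i ∈ s, f i) W = ∑ i ∈ s, T.R X Y (f i) W := by
  classical
  induction s using Finset.induction_on with
  | empty => simpa using R_zero3 T X Y W
  | insert _ _ hx ih => rw [Finset.sum_insert hx, T.add3, ih, Finset.sum_insert hx]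

lemma R_zero4 (X Y Z : V) : T.R X Y Z 0 = 0 := by
  have := T.add4 X Y Z 0 0; simp at this; exact this

lemma R_sum4 {ι : Type*} (s : Finset ι) (f : ι → V) (X Y Z : V) :
    T.R X Y Z (∑ i ∈ s, f i) = ∑ i ∈ s, T.R X Y Z (f i) := by
  classical
  induction s using Finset.induction_on with
  | empty => simpa using R_zero4 T X Y Z
  | insert _ _ hx ih => rw [Finset.sum_insert hx, T.add4, ih, Finset.sum_insert hx]

lemma R_diag_real (X Z : V) : ((T.R X X Z Z)).im = 0 := by
  have h2 := congrArg Complex.im (T.conj_symm X X Z Z)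
  simp at h2
  linarith

lemma R_diag_swap (X Z : V) : T.R X X Z Z = T.R Z Z X X := by
  rw [T.sym13 X X Z Z, T.sym24 Z X X Z]

end Basics

section Royden
variable {V : Type*} [AddCommGroup V] [Module ℂ V] (T : KahlerCurvature V)

/-- the four fourth roots of unity -/
def c4 : Fin 4 → ℂ := ![1, Complex.I, -1, -Complex.I]

lemma royden_step34 (A B x Y : V) :
    ∑ a : Fin 4, T.R A B (c4 a • x + Y) (c4 a • x + Y)
      = 4 * T.R A B x x + 4 * T.R A B Y Y := by
  simp only [T.add3, T.add4, T.smul3, T.smul4, Fin.sum_univ_four, c4]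
  simp only [Matrix.cons_val_zero, Matrix.cons_val_one, Matrix.head_cons, Matrix.cons_val_two,
    Matrix.tail_cons, Matrix.cons_val_three, map_one, map_neg, Complex.conj_I, map_ofNat]
  linear_combination (-2 * T.R A B x x) * Complex.I_sq

lemma royden_step (x Y : V) :
    ∑ a : Fin 4, T.R (c4 a • x + Y) (c4 a • x + Y) (c4 a • x + Y) (c4 a • x + Y)
      = 4 * T.R x x x x + 4 * T.R Y Y Y Y + 16 * T.R x x Y Y := by
  have e1 : T.R x Y Y x = T.R x x Y Y := T.sym24 x Y Y x
  have e2 : T.R Y x x Y = T.R x x Y Y := T.sym13 Y x x Y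
  have e3 : T.R Y Y x x = T.R x x Y Y := (R_diag_swap T Y x)
  simp only [T.add1, T.add2, T.add3, T.add4, T.smul1, T.smul2, T.smul3, T.smul4,
    Fin.sum_univ_four, c4]
  simp only [Matrix.cons_val_zero, Matrix.cons_val_one, Matrix.head_cons, Matrix.cons_val_two,
    Matrix.tail_cons, Matrix.cons_val_three, map_one, map_neg, Complex.conj_I, map_ofNat]
  have I4 : Complex.I ^ 4 = 1 := by
    norm_num [pow_succ, Complex.I_sq]
  linear_combination (4:ℂ) * e1 + 4 * e2 + 4 * e3 +
    (2 * T.R x Y x Y + 2 * T.R Y x Y x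
      - 2 * (T.R x x Y Y + T.R x Y Y x + T.R Y x x Y + T.R Y Y x x)) * Complex.I_sq +
    (2 * T.R x x x x) * I4

end Royden

section Royden2
variable {V : Type*} [AddCommGroup V] [Module ℂ V] (T : KahlerCurvature V)

/-- Royden random vector -/
def wv {m : ℕ} (x : Fin m → V) (ε : Fin m → Fin 4) : V := ∑ i, c4 (ε i) • x i

lemma pi_succ_sum {M : Type*} [AddCommMonoid M] (m : ℕ) (g : (Fin (m+1) → Fin 4) → M) :
    ∑ ε : Fin (m+1) → Fin 4, g ε = ∑ a : Fin 4, ∑ ε : Fin m → Fin 4, g (Fin.cons a ε) := by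
  calc ∑ ε : Fin (m+1) → Fin 4, g ε
      = ∑ p : Fin 4 × (Fin m → Fin 4), g (Fin.consEquiv (fun _ => Fin 4) p) :=
        (Fintype.sum_equiv (Fin.consEquiv fun _ => Fin 4) _ _ fun p => rfl).symm
    _ = ∑ a : Fin 4, ∑ ε : Fin m → Fin 4, g (Fin.cons a ε) := Fintype.sum_prod_type _

lemma wv_cons {m : ℕ} (x : Fin (m+1) → V) (a : Fin 4) (ε : Fin m → Fin 4) :
    wv x (Fin.cons a ε) = c4 a • x 0 + wv (x ∘ Fin.succ) ε := by
  unfold wv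
  rw [Fin.sum_univ_succ]
  simp [Fin.cons_zero, Fin.cons_succ, Function.comp]

lemma wv_zero (x : Fin 0 → V) (ε : Fin 0 → Fin 4) : wv x ε = 0 := by simp [wv]

lemma royden_M (m : ℕ) (x : Fin m → V) (A B : V) :
    ∑ ε : Fin m → Fin 4, T.R A B (wv x ε) (wv x ε)
      = 4 ^ m * ∑ i, T.R A B (x i) (x i) := by
  induction m with
  | zero =>
      rw [Fintype.sum_unique fun ε => T.R A B (wv x ε) (wv x ε)]
      simp [wv_zero, R_zero3]
  | succ m ih =>
      rw [pi_succ_sum]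
      have : ∀ a : Fin 4, ∀ ε : Fin m → Fin 4,
          T.R A B (wv x (Fin.cons a ε)) (wv x (Fin.cons a ε))
          = T.R A B (c4 a • x 0 + wv (x ∘ Fin.succ) ε) (c4 a • x 0 + wv (x ∘ Fin.succ) ε) := by
        intro a ε; rw [wv_cons]
      simp only [this]
      rw [Finset.sum_comm]
      have : ∀ ε : Fin m → Fin 4,
          ∑ a : Fin 4, T.R A B (c4 a • x 0 + wv (x ∘ Fin.succ) ε) (c4 a • x 0 + wv (x ∘ Fin.succ) ε)
          = 4 * T.R A B (x 0) (x 0) + 4 * T.R A B (wv (x ∘ Fin.succ) ε) (wv (x ∘ Fin.succ) ε) :=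
        fun ε => royden_step34 T A B (x 0) (wv (x ∘ Fin.succ) ε)
      rw [Finset.sum_congr rfl fun ε _ => this ε]
      rw [Finset.sum_add_distrib, Finset.sum_const, ← Finset.mul_sum, ih (x ∘ Fin.succ)]
      rw [Fin.sum_univ_succ]
      simp [Function.comp]
      ring

lemma royden_L (m : ℕ) (x : Fin m → V) :
    ∑ ε : Fin m → Fin 4, T.R (wv x ε) (wv x ε) (wv x ε) (wv x ε)
      = 4 ^ m * (2 * ∑ i, ∑ j, T.R (x i) (x i) (x j) (x j)
          - ∑ i, T.R (x i) (x i) (x i) (x i)) := by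
  induction m with
  | zero =>
      rw [Fintype.sum_unique fun ε => T.R (wv x ε) (wv x ε) (wv x ε) (wv x ε)]
      simp [wv_zero, R_zero3]
  | succ m ih =>
      rw [pi_succ_sum]
      have e1 : ∀ a : Fin 4, ∀ ε : Fin m → Fin 4,
          T.R (wv x (Fin.cons a ε)) (wv x (Fin.cons a ε)) (wv x (Fin.cons a ε)) (wv x (Fin.cons a ε))
          = T.R (c4 a • x 0 + wv (x ∘ Fin.succ) ε) (c4 a • x 0 + wv (x ∘ Fin.succ) ε)
              (c4 a • x 0 + wv (x ∘ Fin.succ) ε) (c4 a • x 0 + wv (x ∘ Fin.succ) ε) := by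
        intro a ε; rw [wv_cons]
      simp only [e1]
      rw [Finset.sum_comm]
      rw [Finset.sum_congr rfl fun ε _ => royden_step T (x 0) (wv (x ∘ Fin.succ) ε)]
      rw [Finset.sum_add_distrib, Finset.sum_add_distrib, Finset.sum_const,
        ← Finset.mul_sum, ← Finset.mul_sum, ih (x ∘ Fin.succ), royden_M]
      -- now pure algebra over sums on Fin (m+1) vs Fin m
      rw [show (∑ i, ∑ j, T.R (x i) (x i) (x j) (x j))
          = T.R (x 0) (x 0) (x 0) (x 0) + ∑ j : Fin m, T.R (x 0) (x 0) (x j.succ) (x j.succ)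
            + (∑ i : Fin m, T.R (x i.succ) (x i.succ) (x 0) (x 0)
              + ∑ i : Fin m, ∑ j : Fin m, T.R (x i.succ) (x i.succ) (x j.succ) (x j.succ)) by
        rw [Fin.sum_univ_succ]
        congr 1
        · rw [Fin.sum_univ_succ]
        · rw [← Finset.sum_add_distrib]
          exact Finset.sum_congr rfl fun i _ => by rw [Fin.sum_univ_succ]]
      rw [show (∑ i, T.R (x i) (x i) (x i) (x i))
          = T.R (x 0) (x 0) (x 0) (x 0) + ∑ i : Fin m, T.R (x i.succ) (x i.succ) (x i.succ) (x i.succ) from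
        Fin.sum_univ_succ _]
      have e2 : ∑ i : Fin m, T.R (x i.succ) (x i.succ) (x 0) (x 0)
          = ∑ j : Fin m, T.R (x 0) (x 0) (x j.succ) (x j.succ) :=
        Finset.sum_congr rfl fun i _ => R_diag_swap T _ _
      simp only [Function.comp, Finset.card_univ, Fintype.card_pi, Fintype.card_fin,
        Finset.prod_const, nsmul_eq_mul]
      rw [e2]
      push_cast
      ring
end Royden2

section RoydenIneq
variable {V : Type*} [AddCommGroup V] [Module ℂ V]

lemma royden_ineq (T : KahlerCurvature V) (hneg : ∀ X : V, (T.R X X X X).re ≤ 0)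
    (m : ℕ) (x : Fin m → V) :
    2 * (∑ i, ∑ j, T.R (x i) (x i) (x j) (x j)).re ≤ 0 := by
  have hid := congrArg Complex.re (royden_L T m x)
  rw [Complex.re_sum] at hid
  have hL : ∑ ε : Fin m → Fin 4, (T.R (wv x ε) (wv x ε) (wv x ε) (wv x ε)).re ≤ 0 :=
    Finset.sum_nonpos fun ε _ => hneg _
  rw [hid] at hL
  have h4 : (0:ℝ) < 4 ^ m := by positivity
  have hre : ((4:ℂ) ^ m * (2 * ∑ i, ∑ j, T.R (x i) (x i) (x j) (x j)
          - ∑ i, T.R (x i) (x i) (x i) (x i))).re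
      = (4:ℝ) ^ m * (2 * (∑ i, ∑ j, T.R (x i) (x i) (x j) (x j)).re
          - (∑ i, T.R (x i) (x i) (x i) (x i)).re) := by
    rw [show ((4:ℂ) ^ m) = ((4:ℝ) ^ m : ℝ) by push_cast; ring]
    rw [Complex.re_ofReal_mul]
    simp [Complex.sub_re]
  rw [hre] at hL
  have hdiag : (∑ i, T.R (x i) (x i) (x i) (x i)).re ≤ 0 := by
    rw [Complex.re_sum]; exact Finset.sum_nonpos fun i _ => hneg _
  nlinarith
end RoydenIneq

section Ext

/-- type synonym to carry the `h` inner product -/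
def HC (V : Type*) : Type _ := V

lemma exists_hON_basis {V : Type*} [NormedAddCommGroup V] [InnerProductSpace ℂ V]
    [FiniteDimensional ℂ V] (n : ℕ) (hn : Module.finrank ℂ V = n) (hn1 : 0 < n)
    (h : V → V → ℂ)
    (h_add : ∀ X X' Y, h (X + X') Y = h X Y + h X' Y)
    (h_smul : ∀ (a : ℂ) (X Y : V), h (a • X) Y = a * h X Y)
    (h_herm : ∀ X Y, h Y X = (starRingEnd ℂ) (h X Y))
    (h_pos : ∀ X : V, X ≠ 0 → 0 < (h X X).re)
    (u : V) (hu : h u u = 1) :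
    ∃ b : Module.Basis (Fin n) ℂ V, (∀ i j, h (b i) (b j) = if i = j then 1 else 0)
      ∧ b ⟨0, hn1⟩ = u := by
  letI : AddCommGroup (HC V) := inferInstanceAs (AddCommGroup V)
  letI : Module ℂ (HC V) := inferInstanceAs (Module ℂ V)
  have hz : ∀ Y : V, h 0 Y = 0 := h_zero1 h h_add
  letI innerInst : Inner ℂ (HC V) := ⟨fun x y => h y x⟩
  have hconj : ∀ x y : HC V,
      (starRingEnd ℂ) (@inner ℂ _ innerInst y x) = @inner ℂ _ innerInst x y :=
    fun x y => (h_herm x y).symm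
  have hnonneg : ∀ x : HC V, 0 ≤ (@inner ℂ _ innerInst x x).re := by
    intro x
    rcases eq_or_ne (x : V) 0 with hx | hx
    · change (0:ℝ) ≤ (h x x).re
      rw [show (x : V) = 0 from hx]
      have h00 : (h (0:V) (0:V)).re = 0 := by rw [hz]; simp
      exact h00.ge
    · exact le_of_lt (h_pos _ hx)
  have haddl : ∀ x y z : HC V,
      @inner ℂ _ innerInst (x + y) z = @inner ℂ _ innerInst x z + @inner ℂ _ innerInst y z :=
    fun x y z => h_add2 h h_add h_herm z x y
  have hsmull : ∀ (x y : HC V) (r : ℂ),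
      @inner ℂ _ innerInst (r • x) y = (starRingEnd ℂ) r * @inner ℂ _ innerInst x y :=
    fun x y r => h_smul2 h h_smul h_herm r y x
  have hdef : ∀ x : HC V, @inner ℂ _ innerInst x x = 0 → x = 0 := by
    intro x hx
    by_contra hne
    have := h_pos (x : V) hne
    change h x x = 0 at hx
    rw [hx] at this
    simp at this
  letI core : InnerProductSpace.Core ℂ (HC V) :=
    { toInner := innerInst
      conj_inner_symm := hconj
      re_inner_nonneg := hnonneg
      add_left := haddl
      smul_left := hsmull
      definite := hdef }
  letI nacg : NormedAddCommGroup (HC V) := core.toNormedAddCommGroup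
  letI ips : @InnerProductSpace ℂ (HC V) _ nacg.toSeminormedAddCommGroup :=
    InnerProductSpace.ofCore (inferInstance : PreInnerProductSpace.Core ℂ (HC V))
  haveI hfd : @FiniteDimensional ℂ (HC V) _ _ _ := inferInstanceAs (FiniteDimensional ℂ V)
  have hcard : Module.finrank ℂ (HC V) = Fintype.card (Fin n) := by
    rw [Fintype.card_fin]; exact hn
  set s : Set (Fin n) := {⟨0, hn1⟩} with hs
  have horth : @Orthonormal ℂ (HC V) _ nacg.toSeminormedAddCommGroup ips _
      (s.restrict (fun _ => u)) := by
    apply orthonormal_iff_ite.mpr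
    intro i j
    have hij : i = j := by
      rcases i with ⟨i, hi⟩; rcases j with ⟨j, hj⟩
      simp only [hs, Set.mem_singleton_iff] at hi hj
      simp [hi, hj]
    rw [if_pos hij, hij]
    exact hu
  obtain ⟨b, hb⟩ :=
    @Orthonormal.exists_orthonormalBasis_extension_of_card_eq ℂ _ (HC V) nacg ips _
      (Fin n) _ hcard _ s horth
  have hb0 : b ⟨0, hn1⟩ = u := hb _ (by simp [hs])
  refine ⟨(b.toBasis).map (LinearEquiv.refl ℂ V), ?_, ?_⟩
  · intro i j
    have hbo := (orthonormal_iff_ite.mp b.orthonormal) j i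
    change (@inner ℂ (HC V) innerInst (b j) (b i)) = _
    rw [hbo]
    by_cases hij : i = j <;> simp [hij, eq_comm]
  · exact hb0
end Ext

section TraceInv
variable {V : Type*} [AddCommGroup V] [Module ℂ V]

lemma ric_trace_indep (h : V → V → ℂ)
    (h_add : ∀ X X' Y, h (X + X') Y = h X Y + h X' Y)
    (h_smul : ∀ (a : ℂ) (X Y : V), h (a • X) Y = a * h X Y)
    (h_herm : ∀ X Y, h Y X = (starRingEnd ℂ) (h X Y))
    (T : KahlerCurvature V) (n : ℕ) (b : Module.Basis (Fin n) ℂ V)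
    (hb : ∀ i j, h (b i) (b j) = if i = j then 1 else 0)
    (c : Fin n → V)
    (hc : ∀ i j, h (c i) (c j) = if i = j then 1 else 0)
    (X Y : V) :
    ∑ m, T.R X Y (c m) (c m) = ∑ m, T.R X Y (b m) (b m) := by
  classical
  have hrepr : ∀ (z : V) (a : Fin n), (b.repr z) a = h z (b a) := by
    intro z a
    have e : h z (b a) = ∑ i, (b.repr z) i * (if i = a then 1 else 0) := by
      conv_lhs => rw [← b.sum_repr z]
      rw [h_sum1 h h_add]
      exact Finset.sum_congr rfl fun i _ => by rw [h_smul, hb]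
    rw [e]
    simp
  have hexp : ∀ z : V, z = ∑ a, h z (b a) • b a := by
    intro z
    conv_lhs => rw [← b.sum_repr z]
    exact Finset.sum_congr rfl fun a _ => by rw [hrepr]
  set M : Matrix (Fin n) (Fin n) ℂ := Matrix.of (fun m a => h (c m) (b a)) with hM
  have hMMH : M * M.conjTranspose = 1 := by
    ext m m'
    rw [Matrix.mul_apply, Matrix.one_apply]
    have e1 : h (c m) (c m') = ∑ a, (starRingEnd ℂ) (h (c m') (b a)) * h (c m) (b a) := by
      conv_lhs => rw [hexp (c m')]
      rw [h_sum2 h h_add h_herm]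
      exact Finset.sum_congr rfl fun a _ => by rw [h_smul2 h h_smul h_herm]
    calc ∑ a, M m a * M.conjTranspose a m'
        = ∑ a, (starRingEnd ℂ) (h (c m') (b a)) * h (c m) (b a) := by
          refine Finset.sum_congr rfl fun a _ => ?_
          rw [Matrix.conjTranspose_apply]
          simp only [hM, Matrix.of_apply, Complex.star_def]
          ring
      _ = h (c m) (c m') := e1.symm
      _ = if m = m' then 1 else 0 := hc m m'
  have hMHM : M.conjTranspose * M = 1 := mul_eq_one_comm.mp hMMH
  have key : ∀ a1 a2 : Fin n,
      (∑ m, h (c m) (b a1) * (starRingEnd ℂ) (h (c m) (b a2))) = if a1 = a2 then 1 else 0 := by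
    intro a1 a2
    have e : (M.conjTranspose * M) a2 a1 = (1 : Matrix (Fin n) (Fin n) ℂ) a2 a1 := by
      rw [hMHM]
    rw [Matrix.mul_apply, Matrix.one_apply] at e
    calc (∑ m, h (c m) (b a1) * (starRingEnd ℂ) (h (c m) (b a2)))
        = ∑ m, M.conjTranspose a2 m * M m a1 := by
          refine Finset.sum_congr rfl fun m _ => ?_
          rw [Matrix.conjTranspose_apply]
          simp only [hM, Matrix.of_apply, Complex.star_def]
          ring
      _ = if a2 = a1 then 1 else 0 := e
      _ = if a1 = a2 then 1 else 0 := by by_cases hx : a1 = a2 <;> simp [hx, eq_comm]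
  calc ∑ m, T.R X Y (c m) (c m)
      = ∑ m, ∑ a1, ∑ a2, h (c m) (b a1) * ((starRingEnd ℂ) (h (c m) (b a2)) * T.R X Y (b a1) (b a2)) := by
        refine Finset.sum_congr rfl fun m _ => ?_
        conv_lhs => rw [hexp (c m)]
        rw [R_sum3]
        refine Finset.sum_congr rfl fun a1 _ => ?_
        rw [T.smul3, R_sum4]
        rw [Finset.mul_sum]
        refine Finset.sum_congr rfl fun a2 _ => ?_
        rw [T.smul4]
    _ = ∑ a1, ∑ a2, (∑ m, h (c m) (b a1) * (starRingEnd ℂ) (h (c m) (b a2))) * T.R X Y (b a1) (b a2) := by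
        rw [Finset.sum_comm]
        refine Finset.sum_congr rfl fun a1 _ => ?_
        rw [Finset.sum_comm]
        refine Finset.sum_congr rfl fun a2 _ => ?_
        rw [Finset.sum_mul]
        exact Finset.sum_congr rfl fun m _ => by ring
    _ = ∑ a1, ∑ a2, (if a1 = a2 then 1 else 0) * T.R X Y (b a1) (b a2) := by
        refine Finset.sum_congr rfl fun a1 _ => Finset.sum_congr rfl fun a2 _ => ?_
        rw [key]
    _ = ∑ m, T.R X Y (b m) (b m) := by
        refine Finset.sum_congr rfl fun a1 _ => ?_
        simp [ite_mul]
end TraceInv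

section LI
variable {V : Type*} [AddCommGroup V] [Module ℂ V]

lemma li_of_hON (h : V → V → ℂ)
    (h_add : ∀ X X' Y, h (X + X') Y = h X Y + h X' Y)
    (h_smul : ∀ (a : ℂ) (X Y : V), h (a • X) Y = a * h X Y)
    {k : ℕ} (f : Fin k → V)
    (hf : ∀ i j, h (f i) (f j) = if i = j then 1 else 0) :
    LinearIndependent ℂ f := by
  rw [Fintype.linearIndependent_iff]
  intro g hg i
  have e : h (∑ j, g j • f j) (f i) = g i := by
    rw [h_sum1 h h_add]
    have : ∀ j, h (g j • f j) (f i) = g j * (if j = i then 1 else 0) := fun j => by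
      rw [h_smul, hf]
    rw [Finset.sum_congr rfl fun j _ => this j]
    simp
  rw [hg, h_zero1 h h_add] at e
  exact e.symm
end LI

section Star
variable {V : Type*} [NormedAddCommGroup V] [InnerProductSpace ℂ V] [FiniteDimensional ℂ V]

lemma star_bound
    (n k : ℕ) (hn : Module.finrank ℂ V = n) (hk1 : 1 ≤ k) (hkn : k < n) (σ : ℝ)
    (h : V → V → ℂ)
    (h_add : ∀ X X' Y, h (X + X') Y = h X Y + h X' Y)
    (h_smul : ∀ (a : ℂ) (X Y : V), h (a • X) Y = a * h X Y)
    (h_herm : ∀ X Y, h Y X = (starRingEnd ℂ) (h X Y))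
    (h_pos : ∀ X : V, X ≠ 0 → 0 < (h X X).re)
    (T : KahlerCurvature V)
    (v : Module.Basis (Fin n) ℂ V)
    (hv : ∀ i j, h (v i) (v j) = if i = j then 1 else 0)
    (hRick : ∀ P : Submodule ℂ V, Module.finrank ℂ P = k →
      ∀ f : Fin k → V, (∀ j, f j ∈ P) →
        (∀ i j, h (f i) (f j) = if i = j then 1 else 0) →
        Submodule.span ℂ (Set.range f) = P →
        ∀ X ∈ P,
          (∑ j, T.R X X (f j) (f j)).re ≤ -((k : ℝ) + 1) * σ * (h X X).re)
    (u : V) (hu : h u u = 1) :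
    ((n:ℝ) - k) * (T.R u u u u).re
      ≤ -(((n:ℝ) - 1) * ((k:ℝ) + 1) * σ) - ((k:ℝ) - 1) * (∑ m, T.R u u (v m) (v m)).re := by
  classical
  have hn1 : 0 < n := by omega
  obtain ⟨b, hbON, hb0⟩ := exists_hON_basis n hn hn1 h h_add h_smul h_herm h_pos u hu
  set N := n - 1 with hN
  haveI : NeZero N := ⟨by omega⟩
  set i0 : Fin n := ⟨0, hn1⟩ with hi0
  -- index embedding
  have hval : ∀ s : ZMod N, (s.val) < N := fun s => ZMod.val_lt s
  set ι : ZMod N → Fin n := fun s => ⟨s.val + 1, by have := hval s; omega⟩ with hι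
  have hι_inj : Function.Injective ι := by
    intro s1 s2 hs
    have : s1.val = s2.val := by
      have := congrArg (fun x : Fin n => (x : ℕ)) hs
      simpa [hι] using this
    exact ZMod.val_injective N this
  have hι_ne : ∀ s, ι s ≠ i0 := by
    intro s hs
    have := congrArg (fun x : Fin n => (x : ℕ)) hs
    simp [hι, hi0] at this
  -- the A and y quantities
  set A : ℝ := (T.R u u u u).re with hA
  set y : ZMod N → ℝ := fun s => (T.R u u (b (ι s)) (b (ι s))).re with hy
  set i0k : Fin k := ⟨0, by omega⟩ with hi0k
  -- windows
  have window : ∀ t : ZMod N,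
      A + ∑ j ∈ Finset.univ.erase i0k, y (t + (((j : ℕ) - 1 : ℕ) : ZMod N))
        ≤ -((k : ℝ) + 1) * σ := by
    intro t
    set f : Fin k → V := fun i => if (i : ℕ) = 0 then u else b (ι (t + (((i : ℕ) - 1 : ℕ) : ZMod N))) with hf
    have hfi0 : f i0k = u := by simp [hf, hi0k]
    have hfON : ∀ i j, h (f i) (f j) = if i = j then 1 else 0 := by
      intro i j
      rcases eq_or_ne (i : ℕ) 0 with hi | hi <;> rcases eq_or_ne (j : ℕ) 0 with hj | hj
      · have hij : i = j := Fin.ext (by omega)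
        simp [hf, hi, hj, hij, hu]
      · have hij : i ≠ j := fun e => hj (e ▸ hi)
        rw [hf]
        simp only [hi, if_true, hj, if_false, if_neg hij]
        rw [← hb0, hbON]
        rw [if_neg (fun e => hι_ne _ e.symm)]
      · have hij : i ≠ j := fun e => hi (e ▸ hj)
        rw [hf]
        simp only [hj, if_true, hi, if_false, if_neg hij]
        rw [← hb0, hbON]
        rw [if_neg (hι_ne _)]
      · rw [hf]
        simp only [hi, hj, if_false]
        rw [hbON]
        have hlt : ∀ m : Fin k, (m : ℕ) ≠ 0 → ((m : ℕ) - 1) < N := by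
          intro m _; have := m.isLt; omega
        by_cases hij : i = j
        · simp [hij]
        · rw [if_neg hij, if_neg]
          intro e
          apply hij
          have e2 := hι_inj e
          have e3 : ((((i : ℕ) - 1 : ℕ)) : ZMod N) = (((j : ℕ) - 1 : ℕ) : ZMod N) := by
            have := congrArg (fun z => z - t) e2
            simpa [add_comm, add_sub_cancel_left] using this
          have e4 := congrArg ZMod.val e3
          rw [ZMod.val_cast_of_lt (hlt i hi), ZMod.val_cast_of_lt (hlt j hj)] at e4
          have : (i : ℕ) = (j : ℕ) := by omega
          exact Fin.ext this
    have hLI : LinearIndependent ℂ f := li_of_hON h h_add h_smul f hfON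
    set P : Submodule ℂ V := Submodule.span ℂ (Set.range f) with hP
    have hfr : Module.finrank ℂ P = k := by
      rw [hP, finrank_span_eq_card hLI, Fintype.card_fin]
    have hmem : ∀ j, f j ∈ P := fun j => Submodule.subset_span ⟨j, rfl⟩
    have huP : u ∈ P := hfi0 ▸ hmem i0k
    have hineq := hRick P hfr f hmem hfON rfl u huP
    rw [hu] at hineq
    simp only [Complex.one_re, mul_one] at hineq
    rw [Complex.re_sum] at hineq
    rw [← Finset.sum_erase_add Finset.univ _ (Finset.mem_univ i0k)] at hineq
    rw [hfi0] at hineq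
    have : ∑ j ∈ Finset.univ.erase i0k, (T.R u u (f j) (f j)).re
        = ∑ j ∈ Finset.univ.erase i0k, y (t + (((j : ℕ) - 1 : ℕ) : ZMod N)) := by
      refine Finset.sum_congr rfl fun j hj => ?_
      have hj0 : (j : ℕ) ≠ 0 := by
        intro e
        have : j = i0k := Fin.ext (by simpa [hi0k] using e)
        exact (Finset.mem_erase.mp hj).1 this
      simp only [hf, hj0, if_false]
      try rfl
    rw [this] at hineq
    linarith
  -- sum the window inequalities over t
  have hsums : ∀ c : ZMod N, ∑ t : ZMod N, y (t + c) = ∑ s : ZMod N, y s := by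
    intro c
    exact Fintype.sum_equiv (Equiv.addRight c) _ _ fun t => rfl
  have hcardN : (Finset.univ : Finset (ZMod N)).card = N := by
    simpa using ZMod.card N
  have hsum : ∑ t : ZMod N, (A + ∑ j ∈ Finset.univ.erase i0k, y (t + (((j : ℕ) - 1 : ℕ) : ZMod N)))
      ≤ ∑ _t : ZMod N, (-((k : ℝ) + 1) * σ) :=
    Finset.sum_le_sum (fun t _ => window t)
  have hLHS : ∑ t : ZMod N, (A + ∑ j ∈ Finset.univ.erase i0k, y (t + (((j : ℕ) - 1 : ℕ) : ZMod N)))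
      = (N : ℝ) * A + ((k : ℝ) - 1) * ∑ s : ZMod N, y s := by
    rw [Finset.sum_add_distrib, Finset.sum_const, hcardN, Finset.sum_comm]
    have e1 : ∀ j : Fin k, j ∈ Finset.univ.erase i0k →
        ∑ t : ZMod N, y (t + (((j : ℕ) - 1 : ℕ) : ZMod N)) = ∑ s : ZMod N, y s :=
      fun j _ => hsums _
    rw [Finset.sum_congr rfl e1, Finset.sum_const,
      Finset.card_erase_of_mem (Finset.mem_univ i0k), Finset.card_univ, Fintype.card_fin,
      nsmul_eq_mul, nsmul_eq_mul]
    have : ((k - 1 : ℕ) : ℝ) = (k : ℝ) - 1 := by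
      push_cast [Nat.cast_sub hk1]; ring
    rw [this]
  have hRHS : ∑ _t : ZMod N, (-((k : ℝ) + 1) * σ) = (N : ℝ) * (-((k : ℝ) + 1) * σ) := by
    rw [Finset.sum_const, hcardN, nsmul_eq_mul]
  rw [hLHS, hRHS] at hsum
  -- identify ∑ y with Ric over b minus A
  have hStot : ∑ s : ZMod N, y s = (∑ m, (T.R u u (b m) (b m)).re) - A := by
    have hsplit : ∑ m, (T.R u u (b m) (b m)).re
        = (∑ m ∈ Finset.univ.erase i0, (T.R u u (b m) (b m)).re) + A := by
      rw [← Finset.sum_erase_add Finset.univ _ (Finset.mem_univ i0), hb0]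
    have hbij : ∑ m ∈ Finset.univ.erase i0, (T.R u u (b m) (b m)).re = ∑ s : ZMod N, y s := by
      refine (Finset.sum_bij (fun s _ => ι s) ?_ ?_ ?_ ?_).symm
      · intro s _
        exact Finset.mem_erase.mpr ⟨hι_ne s, Finset.mem_univ _⟩
      · intro s1 _ s2 _ e; exact hι_inj e
      · intro m hm
        have hm0 : (m : ℕ) ≠ 0 := by
          intro e
          exact (Finset.mem_erase.mp hm).1 (Fin.ext (by simpa [hi0] using e))
        refine ⟨(((m : ℕ) - 1 : ℕ) : ZMod N), Finset.mem_univ _, ?_⟩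
        have hlt : (m : ℕ) - 1 < N := by have := m.isLt; omega
        apply Fin.ext
        simp only [hι]
        rw [ZMod.val_cast_of_lt hlt]
        omega
      · intro s _; rfl
    rw [hsplit, hbij]
    ring
  rw [hStot] at hsum
  -- trace invariance
  have htr : (∑ m, T.R u u (b m) (b m)) = ∑ m, T.R u u (v m) (v m) := by
    exact ric_trace_indep h h_add h_smul h_herm T n v hv b hbON u u
  have htr' : (∑ m, (T.R u u (b m) (b m)).re) = (∑ m, T.R u u (v m) (v m)).re := by
    rw [← Complex.re_sum, htr]
  rw [htr'] at hsum
  -- final arithmetic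
  have hNr : (N : ℝ) = (n : ℝ) - 1 := by
    rw [hN]; push_cast [Nat.cast_sub (by omega : 1 ≤ n)]; ring
  rw [hNr] at hsum
  nlinarith [hsum]
end Star

section Star2
variable {V : Type*} [NormedAddCommGroup V] [InnerProductSpace ℂ V] [FiniteDimensional ℂ V]

lemma R_zero1 {W : Type*} [AddCommGroup W] [Module ℂ W] (T : KahlerCurvature W) (Y Z U : W) :
    T.R 0 Y Z U = 0 := by
  have := T.add1 0 0 Y Z U; simp at this; exact this

lemma star_bound_scaled
    (n k : ℕ) (hn : Module.finrank ℂ V = n) (hk1 : 1 ≤ k) (hkn : k < n) (σ : ℝ)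
    (h : V → V → ℂ)
    (h_add : ∀ X X' Y, h (X + X') Y = h X Y + h X' Y)
    (h_smul : ∀ (a : ℂ) (X Y : V), h (a • X) Y = a * h X Y)
    (h_herm : ∀ X Y, h Y X = (starRingEnd ℂ) (h X Y))
    (h_pos : ∀ X : V, X ≠ 0 → 0 < (h X X).re)
    (T : KahlerCurvature V)
    (v : Module.Basis (Fin n) ℂ V)
    (hv : ∀ i j, h (v i) (v j) = if i = j then 1 else 0)
    (hRick : ∀ P : Submodule ℂ V, Module.finrank ℂ P = k →
      ∀ f : Fin k → V, (∀ j, f j ∈ P) →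
        (∀ i j, h (f i) (f j) = if i = j then 1 else 0) →
        Submodule.span ℂ (Set.range f) = P →
        ∀ X ∈ P,
          (∑ j, T.R X X (f j) (f j)).re ≤ -((k : ℝ) + 1) * σ * (h X X).re)
    (X : V) :
    ((n:ℝ) - k) * (T.R X X X X).re
      + ((n:ℝ) - 1) * ((k:ℝ) + 1) * σ * ((h X X).re)^2
      + ((k:ℝ) - 1) * (h X X).re * (∑ m, T.R X X (v m) (v m)).re ≤ 0 := by
  rcases eq_or_ne X 0 with hX | hX
  · subst hX
    rw [R_zero1 T, h_zero1 h h_add]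
    simp only [Complex.zero_re]
    have : ∀ m : Fin n, T.R 0 0 (v m) (v m) = 0 := fun m => R_zero1 T _ _ _
    rw [Finset.sum_congr rfl fun m _ => this m]
    simp
  · have hpos : 0 < (h X X).re := h_pos X hX
    set t : ℝ := Real.sqrt ((h X X).re) with htdef
    have ht : 0 < t := Real.sqrt_pos.mpr hpos
    have ht2 : t ^ 2 = (h X X).re := Real.sq_sqrt (le_of_lt hpos)
    have htne : t ≠ 0 := ne_of_gt ht
    set a : ℂ := ((t : ℝ) : ℂ)⁻¹ with ha
    have hac : (starRingEnd ℂ) a = a := by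
      rw [ha, ← Complex.ofReal_inv, Complex.conj_ofReal]
    set u : V := a • X with hudef
    have hXXc : h X X = ((t ^ 2 : ℝ) : ℂ) := by
      rw [ht2]
      exact Complex.ext rfl (h_real h h_herm X)
    have hu : h u u = 1 := by
      rw [hudef, h_smul, h_smul2 h h_smul h_herm, hac, hXXc, ha]
      rw [← Complex.ofReal_inv, ← Complex.ofReal_mul, ← Complex.ofReal_mul]
      norm_cast
      field_simp
    have hsb := star_bound n k hn hk1 hkn σ h h_add h_smul h_herm h_pos T v hv hRick u hu
    -- unfold scalings
    have hRu : T.R u u u u = (((t ^ 4)⁻¹ : ℝ) : ℂ) * T.R X X X X := by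
      rw [hudef, T.smul1, T.smul2, T.smul3, T.smul4, hac, ha]
      rw [← Complex.ofReal_inv]
      push_cast
      ring
    have hRicu : ∀ m : Fin n, T.R u u (v m) (v m) = (((t ^ 2)⁻¹ : ℝ) : ℂ) * T.R X X (v m) (v m) := by
      intro m
      rw [hudef, T.smul1, T.smul2, hac, ha]
      rw [← Complex.ofReal_inv]
      push_cast
      ring
    rw [hRu] at hsb
    rw [Finset.sum_congr rfl (fun m _ => hRicu m), ← Finset.mul_sum] at hsb
    rw [Complex.re_ofReal_mul, Complex.re_ofReal_mul] at hsb
    have h4 : (0:ℝ) < t ^ 4 := by positivity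
    have e1 : t ^ 4 * ((t ^ 4)⁻¹ * (T.R X X X X).re) = (T.R X X X X).re := by
      field_simp
    have e2 : t ^ 4 * ((t ^ 2)⁻¹ * (∑ m, T.R X X (v m) (v m)).re)
        = t ^ 2 * (∑ m, T.R X X (v m) (v m)).re := by
      field_simp
    rw [← ht2]
    nlinarith [mul_le_mul_of_nonneg_left hsb (le_of_lt h4)]
end Star2

section QBuild
variable {V : Type*} [AddCommGroup V] [Module ℂ V]

/-- symmetrized product of two hermitian sesquilinear forms -/
def sform (B1 B2 : V → V → ℂ) : V → V → V → V → ℂ := fun X Y Z W =>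
  B1 X Y * B2 Z W + B2 X Y * B1 Z W + B1 X W * B2 Z Y + B2 X W * B1 Z Y

def KahlerCurvature.addK (K1 K2 : KahlerCurvature V) : KahlerCurvature V where
  R := fun X Y Z W => K1.R X Y Z W + K2.R X Y Z W
  add1 := by intros; rw [K1.add1, K2.add1]; ring
  smul1 := by intros; rw [K1.smul1, K2.smul1]; ring
  add2 := by intros; rw [K1.add2, K2.add2]; ring
  smul2 := by intros; rw [K1.smul2, K2.smul2]; ring
  add3 := by intros; rw [K1.add3, K2.add3]; ring
  smul3 := by intros; rw [K1.smul3, K2.smul3]; ring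
  add4 := by intros; rw [K1.add4, K2.add4]; ring
  smul4 := by intros; rw [K1.smul4, K2.smul4]; ring
  sym13 := by intros X Y Z W; rw [K1.sym13 X Y Z W, K2.sym13 X Y Z W]
  sym24 := by intros X Y Z W; rw [K1.sym24 X Y Z W, K2.sym24 X Y Z W]
  conj_symm := by intros X Y Z W; rw [map_add, ← K1.conj_symm, ← K2.conj_symm]

def KahlerCurvature.smulK (r : ℝ) (K : KahlerCurvature V) : KahlerCurvature V where
  R := fun X Y Z W => (r : ℂ) * K.R X Y Z W
  add1 := by intros; rw [K.add1]; ring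
  smul1 := by intros; rw [K.smul1]; ring
  add2 := by intros; rw [K.add2]; ring
  smul2 := by intros; rw [K.smul2]; ring
  add3 := by intros; rw [K.add3]; ring
  smul3 := by intros; rw [K.smul3]; ring
  add4 := by intros; rw [K.add4]; ring
  smul4 := by intros; rw [K.smul4]; ring
  sym13 := by intros X Y Z W; rw [K.sym13 X Y Z W]
  sym24 := by intros X Y Z W; rw [K.sym24 X Y Z W]
  conj_symm := by
    intros X Y Z W
    rw [map_mul, Complex.conj_ofReal, ← K.conj_symm]

def sformK (B1 B2 : V → V → ℂ)
    (hB1a : ∀ X X' Y, B1 (X + X') Y = B1 X Y + B1 X' Y)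
    (hB1s : ∀ (a : ℂ) (X Y : V), B1 (a • X) Y = a * B1 X Y)
    (hB1h : ∀ X Y, B1 Y X = (starRingEnd ℂ) (B1 X Y))
    (hB2a : ∀ X X' Y, B2 (X + X') Y = B2 X Y + B2 X' Y)
    (hB2s : ∀ (a : ℂ) (X Y : V), B2 (a • X) Y = a * B2 X Y)
    (hB2h : ∀ X Y, B2 Y X = (starRingEnd ℂ) (B2 X Y)) : KahlerCurvature V where
  R := sform B1 B2
  add1 := by intros; unfold sform; simp only [hB1a, hB2a]; ring
  smul1 := by intros; unfold sform; simp only [hB1s, hB2s]; ring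
  add2 := by
    intros; unfold sform
    simp only [h_add2 B1 hB1a hB1h, h_add2 B2 hB2a hB2h]
    ring
  smul2 := by
    intros; unfold sform
    simp only [h_smul2 B1 hB1s hB1h, h_smul2 B2 hB2s hB2h]
    ring
  add3 := by intros; unfold sform; simp only [hB1a, hB2a]; ring
  smul3 := by intros; unfold sform; simp only [hB1s, hB2s]; ring
  add4 := by
    intros; unfold sform
    simp only [h_add2 B1 hB1a hB1h, h_add2 B2 hB2a hB2h]
    ring
  smul4 := by
    intros; unfold sform
    simp only [h_smul2 B1 hB1s hB1h, h_smul2 B2 hB2s hB2h]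
    ring
  sym13 := by intros; unfold sform; ring
  sym24 := by intros; unfold sform; ring
  conj_symm := by
    intros X Y Z W; unfold sform
    simp only [map_add, map_mul]
    rw [← hB1h X Y, ← hB2h X Y, ← hB1h Z W, ← hB2h Z W, ← hB1h X W, ← hB2h X W,
      ← hB1h Z Y, ← hB2h Z Y]
    ring
end QBuild

/-- Lemma 2 (Chu–Lee–Tam, via Royden's trick): `V` carries two Hermitian inner
products; `g` is the ambient inner product (so `g`-orthonormal bases are
`OrthonormalBasis`), and `h` is another Hermitian inner product, linear in the
first argument and conjugate-linear in the second.  If the `k`-Ricci curvature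
(computed with `h`-orthonormal bases) satisfies
`Ric_k(Σ)(X,X̄) ≤ -(k+1)σ h(X,X)`, then for any `g`-orthonormal basis `e`,
`2 ∑_{i,j} R(eᵢ,ēᵢ,eⱼ,ēⱼ)
  ≤ -((n-1)(k+1)σ/(n-k)) ((tr_g h)² + |h|_g²)
    - ((k-1)/(n-k)) (tr_g h)(tr_g Ric) - ((k-1)/(n-k)) ⟨h, Ric⟩_g`,
where `Ric` is the Ricci form of `R` with respect to `h`, computed with the
`h`-orthonormal basis `v`. -/
theorem stmt1 {V : Type*} [NormedAddCommGroup V] [InnerProductSpace ℂ V]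
    [FiniteDimensional ℂ V]
    (n k : ℕ) (hn : Module.finrank ℂ V = n) (hk1 : 1 ≤ k) (hkn : k < n)
    (σ : ℝ)
    (h : V → V → ℂ)
    (h_add : ∀ X X' Y, h (X + X') Y = h X Y + h X' Y)
    (h_smul : ∀ (a : ℂ) (X Y : V), h (a • X) Y = a * h X Y)
    (h_herm : ∀ X Y, h Y X = (starRingEnd ℂ) (h X Y))
    (h_pos : ∀ X : V, X ≠ 0 → 0 < (h X X).re)
    (T : KahlerCurvature V)
    (v : Module.Basis (Fin n) ℂ V)
    (hv : ∀ i j, h (v i) (v j) = if i = j then 1 else 0)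
    (hRick : ∀ P : Submodule ℂ V, Module.finrank ℂ P = k →
      ∀ f : Fin k → V, (∀ j, f j ∈ P) →
        (∀ i j, h (f i) (f j) = if i = j then 1 else 0) →
        Submodule.span ℂ (Set.range f) = P →
        ∀ X ∈ P,
          (∑ j, T.R X X (f j) (f j)).re ≤ -((k : ℝ) + 1) * σ * (h X X).re)
    (e : OrthonormalBasis (Fin n) ℂ V) :
    2 * (∑ i, ∑ j, T.R (e i) (e i) (e j) (e j)).re
      ≤ -(((n : ℝ) - 1) * ((k : ℝ) + 1) * σ / ((n : ℝ) - (k : ℝ)))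
            * ((∑ i, (h (e i) (e i)).re) ^ 2 + ∑ i, ∑ j, ‖h (e i) (e j)‖ ^ 2)
        - (((k : ℝ) - 1) / ((n : ℝ) - (k : ℝ))) * (∑ i, (h (e i) (e i)).re)
            * (∑ i, (∑ m, T.R (e i) (e i) (v m) (v m)).re)
        - (((k : ℝ) - 1) / ((n : ℝ) - (k : ℝ)))
            * (∑ i, ∑ j, h (e i) (e j) * ∑ m, T.R (e j) (e i) (v m) (v m)).re := by
  classical
  set Ric : V → V → ℂ := fun X Y => ∑ m, T.R X Y (v m) (v m) with hRicdef
  have hRa : ∀ X X' Y, Ric (X + X') Y = Ric X Y + Ric X' Y := by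
    intro X X' Y; simp only [hRicdef]
    rw [← Finset.sum_add_distrib]
    exact Finset.sum_congr rfl fun m _ => T.add1 _ _ _ _ _
  have hRs : ∀ (a : ℂ) (X Y : V), Ric (a • X) Y = a * Ric X Y := by
    intro a X Y; simp only [hRicdef]
    rw [Finset.mul_sum]
    exact Finset.sum_congr rfl fun m _ => T.smul1 _ _ _ _ _
  have hRh : ∀ X Y, Ric Y X = (starRingEnd ℂ) (Ric X Y) := by
    intro X Y; simp only [hRicdef]
    rw [map_sum]
    exact Finset.sum_congr rfl fun m _ => T.conj_symm _ _ _ _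
  set D : ℝ := (n : ℝ) - k with hD
  have hDpos : 0 < D := by
    rw [hD]
    have : (k:ℝ) < (n:ℝ) := by exact_mod_cast hkn
    linarith
  set c1 : ℝ := ((n:ℝ) - 1) * ((k:ℝ) + 1) * σ / D with hc1
  set c2 : ℝ := ((k:ℝ) - 1) / D with hc2
  set Q : KahlerCurvature V :=
    (T.addK ((KahlerCurvature.smulK (c2/4)
        (sformK h Ric h_add h_smul h_herm hRa hRs hRh)).addK
      (KahlerCurvature.smulK (c1/4)
        (sformK h h h_add h_smul h_herm h_add h_smul h_herm)))) with hQ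
  have hQexp : ∀ X Y Z W : V, Q.R X Y Z W
      = T.R X Y Z W + (((c2/4 : ℝ)) : ℂ) * sform h Ric X Y Z W
        + (((c1/4 : ℝ)) : ℂ) * sform h h X Y Z W := by
    intro X Y Z W
    rw [hQ]
    show T.R X Y Z W + ((((c2/4 : ℝ)) : ℂ) * sform h Ric X Y Z W
      + (((c1/4 : ℝ)) : ℂ) * sform h h X Y Z W) = _
    ring
  -- negativity of the diagonal of Q
  have hneg : ∀ X : V, (Q.R X X X X).re ≤ 0 := by
    intro X
    have hst := star_bound_scaled n k hn hk1 hkn σ h h_add h_smul h_herm h_pos T v hv hRick X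
    have himh : (h X X).im = 0 := h_real h h_herm X
    have himr : (Ric X X).im = 0 := by
      show (∑ m, T.R X X (v m) (v m)).im = 0
      rw [Complex.im_sum]
      exact Finset.sum_eq_zero fun m _ => R_diag_real T X (v m)
    have hsdiag : (sform h Ric X X X X).re = 4 * ((h X X).re * (Ric X X).re) := by
      unfold sform
      simp only [Complex.add_re, Complex.mul_re, himh, himr]
      ring
    have hhdiag : (sform h h X X X X).re = 4 * ((h X X).re)^2 := by
      unfold sform
      simp only [Complex.add_re, Complex.mul_re, himh]
      ring
    rw [hQexp]
    simp only [Complex.add_re, Complex.re_ofReal_mul, hsdiag, hhdiag]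
    have e1 : D * c1 = ((n:ℝ)-1)*((k:ℝ)+1)*σ := by rw [hc1]; field_simp
    have e2 : D * c2 = (k:ℝ)-1 := by rw [hc2]; field_simp
    rw [← mul_le_mul_iff_right₀ hDpos, mul_zero]
    calc D * ((T.R X X X X).re + c2/4 * (4 * ((h X X).re * (Ric X X).re))
            + c1/4 * (4 * ((h X X).re)^2))
        = D * (T.R X X X X).re + (D * c2) * ((h X X).re * (Ric X X).re)
          + (D * c1) * ((h X X).re)^2 := by ring
      _ = D * (T.R X X X X).re + ((k:ℝ)-1) * ((h X X).re * (Ric X X).re)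
          + (((n:ℝ)-1)*((k:ℝ)+1)*σ) * ((h X X).re)^2 := by rw [e1, e2]
      _ ≤ 0 := by
          have hrr : Ric X X = ∑ m, T.R X X (v m) (v m) := rfl
          rw [hrr, hD]
          nlinarith [hst]
  -- Royden's trick
  have hroy := royden_ineq Q hneg n (fun i => e i)
  -- expand the Q-sum
  set TrH : ℂ := ∑ i, h (e i) (e i) with hTrH
  set TrR : ℂ := ∑ i, Ric (e i) (e i) with hTrR
  set P1 : ℂ := ∑ i, ∑ j, h (e i) (e j) * Ric (e j) (e i) with hP1
  set Nh : ℂ := ∑ i, ∑ j, h (e i) (e j) * h (e j) (e i) with hNh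
  have hsplit : (∑ i, ∑ j, Q.R (e i) (e i) (e j) (e j))
      = (∑ i, ∑ j, T.R (e i) (e i) (e j) (e j))
        + (((c2/4 : ℝ)) : ℂ) * (TrH * TrR + TrR * TrH + P1 + P1)
        + (((c1/4 : ℝ)) : ℂ) * (TrH * TrH + TrH * TrH + Nh + Nh) := by
    have hP2 : ∑ i, ∑ j, Ric (e i) (e j) * h (e j) (e i) = P1 := by
      rw [Finset.sum_comm]
      rw [hP1]
      exact Finset.sum_congr rfl fun i _ => Finset.sum_congr rfl fun j _ => mul_comm _ _
    have hexpand : ∀ B1 B2 : V → V → ℂ, (∑ i, ∑ j, sform B1 B2 (e i) (e i) (e j) (e j))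
        = (∑ i, ∑ j, B1 (e i) (e i) * B2 (e j) (e j))
          + (∑ i, ∑ j, B2 (e i) (e i) * B1 (e j) (e j))
          + (∑ i, ∑ j, B1 (e i) (e j) * B2 (e j) (e i))
          + (∑ i, ∑ j, B2 (e i) (e j) * B1 (e j) (e i)) := by
      intro B1 B2
      unfold sform
      rw [← Finset.sum_add_distrib, ← Finset.sum_add_distrib, ← Finset.sum_add_distrib]
      refine Finset.sum_congr rfl fun i _ => ?_
      rw [← Finset.sum_add_distrib, ← Finset.sum_add_distrib, ← Finset.sum_add_distrib]
      try exact Finset.sum_congr rfl fun j _ => rfl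
    have hs1 : (∑ i, ∑ j, sform h Ric (e i) (e i) (e j) (e j))
        = TrH * TrR + TrR * TrH + P1 + P1 := by
      rw [hexpand, (Finset.sum_mul_sum _ _ _ _).symm, (Finset.sum_mul_sum _ _ _ _).symm, hP2]
      try rw [← hTrH, ← hTrR, ← hP1]
    have hs2 : (∑ i, ∑ j, sform h h (e i) (e i) (e j) (e j))
        = TrH * TrH + TrH * TrH + Nh + Nh := by
      rw [hexpand, (Finset.sum_mul_sum _ _ _ _).symm]
      try rw [← hTrH, ← hNh]
    rw [← hs1, ← hs2, Finset.mul_sum, Finset.mul_sum, ← Finset.sum_add_distrib,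
      ← Finset.sum_add_distrib]
    refine Finset.sum_congr rfl fun i _ => ?_
    rw [Finset.mul_sum, Finset.mul_sum, ← Finset.sum_add_distrib, ← Finset.sum_add_distrib]
    exact Finset.sum_congr rfl fun j _ => hQexp _ _ _ _
  rw [hsplit] at hroy
  -- real parts
  have himTrH : TrH.im = 0 := by
    rw [hTrH, Complex.im_sum]
    exact Finset.sum_eq_zero fun i _ => h_real h h_herm (e i)
  have himTrR : TrR.im = 0 := by
    rw [hTrR, Complex.im_sum]
    refine Finset.sum_eq_zero fun i _ => ?_
    show (∑ m, T.R (e i) (e i) (v m) (v m)).im = 0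
    rw [Complex.im_sum]
    exact Finset.sum_eq_zero fun m _ => R_diag_real T (e i) (v m)
  have hNhre : Nh.re = ∑ i, ∑ j, ‖h (e i) (e j)‖ ^ 2 := by
    rw [hNh, Complex.re_sum]
    refine Finset.sum_congr rfl fun i _ => ?_
    rw [Complex.re_sum]
    refine Finset.sum_congr rfl fun j _ => ?_
    rw [h_herm (e i) (e j), Complex.mul_conj']
    rw [← Complex.ofReal_pow, Complex.ofReal_re]
  -- put everything together
  simp only [Complex.add_re, Complex.re_ofReal_mul, Complex.mul_re, himTrH, himTrR,
    hNhre, Complex.ofReal_re, Complex.ofReal_im] at hroy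
  have htHre : TrH.re = ∑ i, (h (e i) (e i)).re := by rw [hTrH, Complex.re_sum]
  have htRre : TrR.re = ∑ i, (∑ m, T.R (e i) (e i) (v m) (v m)).re := by
    rw [hTrR, Complex.re_sum]
  have hP1re : P1.re = (∑ i, ∑ j, h (e i) (e j) * ∑ m, T.R (e j) (e i) (v m) (v m)).re := by
    rw [hP1]
  rw [htHre, htRre, hP1re] at hroy
  ring_nf at hroy ⊢
  linarith [hroy]
end
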